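/- Spiral (Tait–Kneser) lemma, nesting of osculating circles: let γ be a smooth unit-speed plane curve with positive strictly decreasing curvature, with center of curvature ω(s) = γ(s) + r(s)·N(s) and radius of curvature r(s) = 1/k(s). Then for any s₀ < s₁ one has |ω(s₁) − ω(s₀)| < r(s₁) − r(s₀); in particular the closed disk bounded by the osculating circle at s₀ lies inside the open disk bounded by the osculating circle at s₁. -/

import Mathlib

open Set Topology Filter RealInnerProductSpace

noncomputable def toE2 (v : Fin 2 → ℝ) : EuclideanSpace ℝ (Fin 2) :=
  (WithLp.equiv 2 (Fin 2 → ℝ)).symm v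

noncomputable def rot2 (v : EuclideanSpace ℝ (Fin 2)) : EuclideanSpace ℝ (Fin 2) :=
  toE2 ![-(v 1), v 0]

lemma rot2_apply0 (v : EuclideanSpace ℝ (Fin 2)) : rot2 v 0 = -(v 1) := rfl
lemma rot2_apply1 (v : EuclideanSpace ℝ (Fin 2)) : rot2 v 1 = v 0 := rfl

lemma rot2_rot2 (v : EuclideanSpace ℝ (Fin 2)) : rot2 (rot2 v) = -v := by
  ext i
  fin_cases i <;> simp [rot2_apply0, rot2_apply1] <;> ring

lemma inner_rot2_self (v : EuclideanSpace ℝ (Fin 2)) : @inner ℝ _ _ v (rot2 v) = 0 := by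
  simp [PiLp.inner_apply, Fin.sum_univ_two, rot2_apply0, rot2_apply1]
  ring

lemma norm_rot2 (v : EuclideanSpace ℝ (Fin 2)) : ‖rot2 v‖ = ‖v‖ := by
  simp [EuclideanSpace.norm_eq, Fin.sum_univ_two, rot2_apply0, rot2_apply1]
  ring_nf

noncomputable def rotCLM : EuclideanSpace ℝ (Fin 2) →L[ℝ] EuclideanSpace ℝ (Fin 2) :=
  LinearMap.toContinuousLinearMap
  { toFun := rot2
    map_add' := by
      intro x y; ext i; fin_cases i <;>
        simp [rot2_apply0, rot2_apply1] <;> ring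
    map_smul' := by
      intro c x; ext i; fin_cases i <;>
        simp [rot2_apply0, rot2_apply1] <;> ring }

lemma rotCLM_apply (v : EuclideanSpace ℝ (Fin 2)) : rotCLM v = rot2 v := rfl
theorem tait_kneser_spiral_lemma
    (I : Set ℝ) (hIo : IsOpen I) (hIc : Convex ℝ I)
    (γ T : ℝ → EuclideanSpace ℝ (Fin 2)) (k k' : ℝ → ℝ)
    (hγ : ∀ s ∈ I, HasDerivAt γ (T s) s)
    (hT : ∀ s ∈ I, ‖T s‖ = 1)
    (hTd : ∀ s ∈ I, HasDerivAt T (k s • rot2 (T s)) s)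
    (hkd : ∀ s ∈ I, HasDerivAt k (k' s) s)
    (hkpos : ∀ s ∈ I, 0 < k s)
    (hkanti : StrictAntiOn k I) :
    ∀ s₀ ∈ I, ∀ s₁ ∈ I, s₀ < s₁ →
      dist (γ s₁ + (k s₁)⁻¹ • rot2 (T s₁)) (γ s₀ + (k s₀)⁻¹ • rot2 (T s₀)) <
        (k s₁)⁻¹ - (k s₀)⁻¹ ∧
      Metric.closedBall (γ s₀ + (k s₀)⁻¹ • rot2 (T s₀)) (k s₀)⁻¹ ⊆
        Metric.ball (γ s₁ + (k s₁)⁻¹ • rot2 (T s₁)) (k s₁)⁻¹ := by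
  have hk0 : ∀ s ∈ I, k s ≠ 0 := fun s hs => (hkpos s hs).ne'
  have hNorm : ∀ s ∈ I, ‖rot2 (T s)‖ = 1 := fun s hs => by
    rw [norm_rot2]; exact hT s hs
  have hNd : ∀ s ∈ I, HasDerivAt (fun t => rot2 (T t)) (-(k s • T s)) s := by
    intro s hs
    have h := (rotCLM.hasFDerivAt (x := T s)).comp_hasDerivAt s (hTd s hs)
    have he : rotCLM (k s • rot2 (T s)) = -(k s • T s) := by
      rw [map_smul, rotCLM_apply, rot2_rot2, smul_neg]
    rw [he] at h
    exact h
  have hrd : ∀ s ∈ I, HasDerivAt (fun t => (k t)⁻¹) (-k' s / k s ^ 2) s :=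
    fun s hs => (hkd s hs).inv (hk0 s hs)
  have hωd : ∀ s ∈ I,
      HasDerivAt (fun t => γ t + (k t)⁻¹ • rot2 (T t))
        ((-k' s / k s ^ 2) • rot2 (T s)) s := by
    intro s hs
    have h1 := (hγ s hs).add ((hrd s hs).smul (hNd s hs))
    refine h1.congr_deriv ?_
    rw [smul_neg, smul_smul, inv_mul_cancel₀ (hk0 s hs), one_smul]
    module
  have hk'np : ∀ s ∈ I, k' s ≤ 0 := by
    intro s hs
    have hmono : 𝓝[>] s ≤ 𝓝[≠] s :=
      nhdsWithin_mono s (fun t ht => ne_of_gt ht)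
    have hslope := (hasDerivAt_iff_tendsto_slope.mp (hkd s hs)).mono_left hmono
    refine le_of_tendsto hslope ?_
    filter_upwards [self_mem_nhdsWithin,
      mem_nhdsWithin_of_mem_nhds (hIo.mem_nhds hs)] with t ht htI
    have h1 : k t < k s := hkanti hs htI ht
    have h2 : s < t := ht
    rw [slope_def_field]
    apply div_nonpos_of_nonpos_of_nonneg <;> linarith
  have hr'0 : ∀ s ∈ I, 0 ≤ -k' s / k s ^ 2 := fun s hs =>
    div_nonneg (by linarith [hk'np s hs]) (sq_nonneg _)
  have hrlt : ∀ a ∈ I, ∀ b ∈ I, a < b → (k a)⁻¹ < (k b)⁻¹ := by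
    intro a ha b hb hab
    have h1 : k b < k a := hkanti ha hb hab
    have h2 : 0 < k b := hkpos b hb
    have := one_div_lt_one_div_of_lt h2 h1
    simpa [one_div] using this
  intro s₀ hs₀ s₁ hs₁ hlt
  have hIcc : Icc s₀ s₁ ⊆ I := hIc.ordConnected.out hs₀ hs₁
  have key : ∀ u : EuclideanSpace ℝ (Fin 2), ‖u‖ = 1 →
      @inner ℝ _ _ ((γ s₁ + (k s₁)⁻¹ • rot2 (T s₁)) - (γ s₀ + (k s₀)⁻¹ • rot2 (T s₀))) u <
        (k s₁)⁻¹ - (k s₀)⁻¹ := by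
    intro u hu
    have hgd : ∀ s ∈ I, HasDerivAt
        (fun t => (k t)⁻¹ - @inner ℝ _ _ (γ t + (k t)⁻¹ • rot2 (T t)) u)
        ((-k' s / k s ^ 2) * (1 - @inner ℝ _ _ (rot2 (T s)) u)) s := by
      intro s hs
      have h2 := HasDerivAt.inner ℝ (hωd s hs) (hasDerivAt_const s u)
      have h3 := (hrd s hs).sub h2
      refine h3.congr_deriv ?_
      simp [inner_zero_right, real_inner_smul_left]
      ring
    have hple : ∀ s ∈ I, @inner ℝ _ _ (rot2 (T s)) u ≤ 1 := by
      intro s hs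
      calc @inner ℝ _ _ (rot2 (T s)) u ≤ ‖rot2 (T s)‖ * ‖u‖ := real_inner_le_norm _ _
        _ = 1 := by rw [hNorm s hs, hu, one_mul]
    have hgmono : MonotoneOn
        (fun t => (k t)⁻¹ - @inner ℝ _ _ (γ t + (k t)⁻¹ • rot2 (T t)) u) (Icc s₀ s₁) := by
      apply monotoneOn_of_deriv_nonneg (convex_Icc _ _)
      · exact fun x hx => ((hgd x (hIcc hx)).continuousAt).continuousWithinAt
      · intro x hx
        rw [interior_Icc] at hx
        exact ((hgd x (hIcc (Ioo_subset_Icc_self hx))).differentiableAt).differentiableWithinAt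
      · intro x hx
        rw [interior_Icc] at hx
        have hxI := hIcc (Ioo_subset_Icc_self hx)
        rw [(hgd x hxI).deriv]
        exact mul_nonneg (hr'0 x hxI) (by linarith [hple x hxI])
    have hs₀m : s₀ ∈ Icc s₀ s₁ := left_mem_Icc.2 hlt.le
    have hs₁m : s₁ ∈ Icc s₀ s₁ := right_mem_Icc.2 hlt.le
    have hweak := hgmono hs₀m hs₁m hlt.le
    have hne : (fun t => (k t)⁻¹ - @inner ℝ _ _ (γ t + (k t)⁻¹ • rot2 (T t)) u) s₀ ≠
        (fun t => (k t)⁻¹ - @inner ℝ _ _ (γ t + (k t)⁻¹ • rot2 (T t)) u) s₁ := by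
      intro heq
      set g := fun t => (k t)⁻¹ - @inner ℝ _ _ (γ t + (k t)⁻¹ • rot2 (T t)) u with hgdef
      have hconst : ∀ s ∈ Icc s₀ s₁, g s = g s₀ := by
        intro s hs
        refine le_antisymm ?_ (hgmono hs₀m hs hs.1)
        rw [heq]
        exact hgmono hs hs₁m hs.2
      have hzero : ∀ s ∈ Ioo s₀ s₁,
          (-k' s / k s ^ 2) * (1 - @inner ℝ _ _ (rot2 (T s)) u) = 0 := by
        intro s hs
        have hev : g =ᶠ[𝓝 s] fun _ => g s₀ := by
          filter_upwards [Ioo_mem_nhds hs.1 hs.2] with t ht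
          exact hconst t (Ioo_subset_Icc_self ht)
        have h0 : HasDerivAt g 0 s :=
          (hasDerivAt_const s (g s₀)).congr_of_eventuallyEq hev
        exact (hgd s (hIcc (Ioo_subset_Icc_self hs))).unique h0
      obtain ⟨c, hc, hceq⟩ := exists_hasDerivAt_eq_slope (fun s => (k s)⁻¹)
        (fun s => -k' s / k s ^ 2) hlt
        (fun x hx => ((hrd x (hIcc hx)).continuousAt).continuousWithinAt)
        (fun x hx => hrd x (hIcc (Ioo_subset_Icc_self hx)))
      have hcI := hIcc (Ioo_subset_Icc_self hc)
      have hr'pos : 0 < -k' c / k c ^ 2 := by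
        rw [hceq]
        have := hrlt s₀ hs₀ s₁ hs₁ hlt
        have : (0:ℝ) < (k s₁)⁻¹ - (k s₀)⁻¹ := by linarith
        exact div_pos this (by linarith [hc.1, hc.2, hlt])
      have hpc : @inner ℝ _ _ (rot2 (T c)) u = 1 := by
        rcases mul_eq_zero.mp (hzero c hc) with h | h
        · exact absurd h hr'pos.ne'
        · linarith
      have hNc : rot2 (T c) = u := by
        have hsq : ‖rot2 (T c) - u‖ ^ 2 = 0 := by
          rw [norm_sub_sq_real, hNorm c hcI, hu, hpc]
          norm_num
        have := pow_eq_zero_iff (n := 2) (by norm_num) |>.mp hsq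
        rwa [norm_eq_zero, sub_eq_zero] at this
      have hqc : @inner ℝ _ _ (T c) u = 0 := by
        rw [← hNc]; exact inner_rot2_self (T c)
      have hqd : ∀ s ∈ I, HasDerivAt (fun t => @inner ℝ _ _ (T t) u)
          (k s * @inner ℝ _ _ (rot2 (T s)) u) s := by
        intro s hs
        have h := HasDerivAt.inner ℝ (hTd s hs) (hasDerivAt_const s u)
        simpa only [inner_zero_right, zero_add, real_inner_smul_left] using h
      have hpd : ∀ s ∈ I, HasDerivAt (fun t => @inner ℝ _ _ (rot2 (T t)) u)
          (-(k s * @inner ℝ _ _ (T s) u)) s := by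
        intro s hs
        have h := HasDerivAt.inner ℝ (hNd s hs) (hasDerivAt_const s u)
        simpa only [inner_zero_right, zero_add, inner_neg_left, real_inner_smul_left] using h
      have hq_pos : ∀ᶠ t in 𝓝[>] c, 0 < @inner ℝ _ _ (T t) u := by
        have hmono : 𝓝[>] c ≤ 𝓝[≠] c := nhdsWithin_mono c (fun t ht => ne_of_gt ht)
        have hsl := (hasDerivAt_iff_tendsto_slope.mp (hqd c hcI)).mono_left hmono
        have hlimpos : 0 < k c * @inner ℝ _ _ (rot2 (T c)) u := by
          rw [hpc, mul_one]; exact hkpos c hcI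
        filter_upwards [hsl.eventually (eventually_gt_nhds hlimpos), self_mem_nhdsWithin]
          with t ht htc
        rw [slope_def_field, hqc, sub_zero] at ht
        have h2 : (0:ℝ) < t - c := sub_pos.2 htc
        have h3 := mul_pos ht h2
        rwa [div_mul_cancel₀ _ h2.ne'] at h3
      obtain ⟨e, he, hesub⟩ := mem_nhdsGT_iff_exists_Ioo_subset.mp hq_pos
      set d := min e s₁ with hd
      have hcd : c < d := lt_min he hc.2
      have hIccd : Icc c d ⊆ I := fun x hx =>
        hIcc ⟨le_trans hc.1.le hx.1, le_trans hx.2 (min_le_right _ _)⟩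
      have hqpos' : ∀ x ∈ Ioo c d, 0 < @inner ℝ _ _ (T x) u := fun x hx =>
        hesub ⟨hx.1, lt_of_lt_of_le hx.2 (min_le_left _ _)⟩
      have hpanti : StrictAntiOn (fun t => @inner ℝ _ _ (rot2 (T t)) u) (Icc c d) := by
        apply strictAntiOn_of_deriv_neg (convex_Icc _ _)
        · exact fun x hx => ((hpd x (hIccd hx)).continuousAt).continuousWithinAt
        · intro x hx
          rw [interior_Icc] at hx
          have hxI := hIccd (Ioo_subset_Icc_self hx)
          rw [(hpd x hxI).deriv]
          have := hqpos' x hx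
          have := hkpos x hxI
          nlinarith
      have hr'zero : ∀ x ∈ Ioo c d, -k' x / k x ^ 2 = 0 := by
        intro x hx
        have hx01 : x ∈ Ioo s₀ s₁ :=
          ⟨lt_trans hc.1 hx.1, lt_of_lt_of_le hx.2 (min_le_right _ _)⟩
        have hplt : @inner ℝ _ _ (rot2 (T x)) u < 1 := by
          have h := hpanti (left_mem_Icc.2 hcd.le) (Ioo_subset_Icc_self hx) hx.1
          exact lt_of_lt_of_eq h hpc
        rcases mul_eq_zero.mp (hzero x hx01) with h | h
        · exact h
        · linarith
      set a := c + (d - c) / 3 with ha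
      set b := c + (d - c) * 2 / 3 with hb
      have hca : c < a := by rw [ha]; linarith
      have hab : a < b := by rw [ha, hb]; linarith
      have hbd : b < d := by rw [hb]; linarith
      have haIoo : a ∈ Ioo c d := ⟨hca, lt_trans hab hbd⟩
      have hbIoo : b ∈ Ioo c d := ⟨lt_trans hca hab, hbd⟩
      have hsubI : Icc a b ⊆ I := fun x hx =>
        hIccd ⟨le_trans hca.le hx.1, le_trans hx.2 hbd.le⟩
      obtain ⟨ξ, hξ, hξeq⟩ := exists_hasDerivAt_eq_slope (fun s => (k s)⁻¹)
        (fun s => -k' s / k s ^ 2) hab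
        (fun x hx => ((hrd x (hsubI hx)).continuousAt).continuousWithinAt)
        (fun x hx => hrd x (hsubI (Ioo_subset_Icc_self hx)))
      have hξcd : ξ ∈ Ioo c d := ⟨lt_trans hca hξ.1, lt_trans hξ.2 hbd⟩
      rw [hr'zero ξ hξcd] at hξeq
      have haI : a ∈ I := hIccd (Ioo_subset_Icc_self haIoo)
      have hbI : b ∈ I := hIccd (Ioo_subset_Icc_self hbIoo)
      have hltr := hrlt a haI b hbI hab
      have hba : (0:ℝ) < b - a := sub_pos.2 hab
      have := div_eq_zero_iff.mp hξeq.symm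
      rcases this with h | h
      · linarith
      · linarith
    have hstrict := lt_of_le_of_ne hweak hne
    simp only at hstrict
    rw [inner_sub_left]
    linarith
  have hrpos : (0:ℝ) < (k s₁)⁻¹ - (k s₀)⁻¹ := by
    linarith [hrlt s₀ hs₀ s₁ hs₁ hlt]
  have hdist : dist (γ s₁ + (k s₁)⁻¹ • rot2 (T s₁)) (γ s₀ + (k s₀)⁻¹ • rot2 (T s₀)) <
      (k s₁)⁻¹ - (k s₀)⁻¹ := by
    by_cases h : (γ s₁ + (k s₁)⁻¹ • rot2 (T s₁)) = (γ s₀ + (k s₀)⁻¹ • rot2 (T s₀))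
    · rw [h, dist_self]; exact hrpos
    · set v := (γ s₁ + (k s₁)⁻¹ • rot2 (T s₁)) - (γ s₀ + (k s₀)⁻¹ • rot2 (T s₀)) with hv
      have hv0 : v ≠ 0 := sub_ne_zero.2 h
      have hnv : ‖v‖ ≠ 0 := norm_ne_zero_iff.2 hv0
      have hkey := key (‖v‖⁻¹ • v) (by
        rw [norm_smul, norm_inv, norm_norm, inv_mul_cancel₀ hnv])
      rw [real_inner_smul_right, real_inner_self_eq_norm_sq] at hkey
      rw [dist_eq_norm]
      calc ‖v‖ = ‖v‖⁻¹ * ‖v‖ ^ 2 := by field_simp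
        _ < (k s₁)⁻¹ - (k s₀)⁻¹ := hkey
  refine ⟨hdist, fun x hx => ?_⟩
  rw [Metric.mem_closedBall] at hx
  rw [Metric.mem_ball]
  have htri := dist_triangle x (γ s₀ + (k s₀)⁻¹ • rot2 (T s₀)) (γ s₁ + (k s₁)⁻¹ • rot2 (T s₁))
  have := dist_comm (γ s₁ + (k s₁)⁻¹ • rot2 (T s₁)) (γ s₀ + (k s₀)⁻¹ • rot2 (T s₀))
  linarith
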